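/- For t ∈ ℂ, consider the homogeneous cubic F_t(x,y,z) = (x+y+z)(xy+yz+zx) − t·xyz. There exists a point (x,y,z) ∈ ℂ³ ∖ {(0,0,0)} at which all three partial derivatives ∂F_t/∂x, ∂F_t/∂y, ∂F_t/∂z vanish if and only if t ∈ {0, 1, 9}. -/

import Mathlib

open MvPolynomial

private lemma cancel_sq {a x : ℂ} (ha : a ≠ 0) (h : a * x ^ 2 = 0) : x = 0 := by
  rcases mul_eq_zero.mp h with h | h
  · exact absurd h ha
  · exact pow_eq_zero_iff two_ne_zero |>.mp h

private lemma key_forward (t x y z : ℂ) (ht0 : t ≠ 0) (ht1 : t ≠ 1) (ht9 : t ≠ 9)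
    (h0 : (x + y + z) * (y + z) + (x * y + y * z + z * x) - t * (y * z) = 0)
    (h1 : (x + y + z) * (x + z) + (x * y + y * z + z * x) - t * (z * x) = 0)
    (h2 : (x + y + z) * (y + x) + (x * y + y * z + z * x) - t * (x * y) = 0) :
    x = 0 ∧ y = 0 ∧ z = 0 := by
  have ht1' : (3 : ℂ) * (t - 1) ≠ 0 := by
    intro h; rcases mul_eq_zero.mp h with h | h
    · norm_num at h
    · exact ht1 (by linear_combination h)
  have ht9' : (9 : ℂ) - t ≠ 0 := sub_ne_zero.2 (Ne.symm ht9)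
  have d01 : (y - x) * ((x + y + z) - t * z) = 0 := by linear_combination h0 - h1
  have d12 : (z - y) * ((x + y + z) - t * x) = 0 := by linear_combination h1 - h2
  rcases mul_eq_zero.mp d01 with hyx | hsz
  · rcases mul_eq_zero.mp d12 with hzy | hsx
    · -- y = x, z = y : all equal
      have hx : x = 0 := cancel_sq ht9' (by
        linear_combination h0 - (3*x + y + 3*z - t*z) * hyx - (z + (6-t)*x) * (hzy + hyx))
      have hy : y = 0 := by linear_combination hyx + hx
      have hz : z = 0 := by linear_combination hzy + hy
      exact ⟨hx, hy, hz⟩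
    · -- y = x, s = t x
      have hx : x = 0 := cancel_sq ht1' (by
        linear_combination h0 - (z + 3*x) * hsx - (y + 2*z - t*z) * hyx)
      have hy : y = 0 := by linear_combination hyx + hx
      have hz : z = 0 := by linear_combination hsx - hyx + (t-2)*hx
      exact ⟨hx, hy, hz⟩
  · rcases mul_eq_zero.mp d12 with hzy | hsx
    · -- z = y, s = t z
      have hy : y = 0 := cancel_sq ht1' (by
        linear_combination h0 - 4*y*hsz - (2*x + z + 3*t*y) * hzy)
      have hx : x = 0 := by linear_combination hsz + (t-1)*hzy + (t-2)*hy
      have hz : z = 0 := by linear_combination hzy + hy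
      exact ⟨hx, hy, hz⟩
    · -- s = t z and s = t x, so t(z - x) = 0, hence z = x
      have hxz : z - x = 0 := by
        rcases mul_eq_zero.mp (show t * (z - x) = 0 by linear_combination hsx - hsz) with h | h
        · exact absurd h ht0
        · exact h
      have hx : x = 0 := cancel_sq ht1' (by
        linear_combination h1 - 4*x*hsx - (2*y + z - t*x) * hxz)
      have hy : y = 0 := by linear_combination hsx - hxz + (t-2)*hx
      have hz : z = 0 := by linear_combination hxz + hx
      exact ⟨hx, hy, hz⟩

/-- The cubic `(x+y+z)(xy+yz+zx) − t·xyz` has a nontrivial common zero of its three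
partial derivatives iff `t ∈ {0, 1, 9}`. -/
theorem singular_fibres_gamma1_6 (t : ℂ) :
    (∃ p : Fin 3 → ℂ, p ≠ 0 ∧ ∀ i : Fin 3,
        MvPolynomial.eval p (MvPolynomial.pderiv i
          ((X 0 + X 1 + X 2) * (X 0 * X 1 + X 1 * X 2 + X 2 * X 0)
            - C t * (X 0 * X 1 * X 2) : MvPolynomial (Fin 3) ℂ)) = 0) ↔
      t = 0 ∨ t = 1 ∨ t = 9 := by
  constructor
  · rintro ⟨p, hp, h⟩
    by_contra hne
    push_neg at hne
    obtain ⟨ht0, ht1, ht9⟩ := hne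
    have h0 := h 0
    have h1 := h 1
    have h2 := h 2
    simp only [map_sub, pderiv_mul, pderiv_X, Pi.single_apply] at h0 h1 h2
    simp at h0 h1 h2
    obtain ⟨hx, hy, hz⟩ := key_forward t (p 0) (p 1) (p 2) ht0 ht1 ht9
      (by linear_combination h0) (by linear_combination h1) (by linear_combination h2)
    apply hp
    funext i
    fin_cases i <;> assumption
  · rintro (rfl | rfl | rfl)
    · -- t = 0 : use (1, ω, ω²) with ω a primitive cube root of unity
      set ω : ℂ := ⟨-1/2, Real.sqrt 3 / 2⟩ with hω
      have h3 : Real.sqrt 3 * Real.sqrt 3 = 3 := Real.mul_self_sqrt (by norm_num)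
      have hw : ω * ω + ω + 1 = 0 := by
        rw [hω]
        apply Complex.ext <;> simp [Complex.mul_re, Complex.mul_im] <;> nlinarith [h3]
      refine ⟨![1, ω, ω * ω], ?_, ?_⟩
      · intro h
        have : (![1, ω, ω * ω] : Fin 3 → ℂ) 0 = 0 := by rw [h]; rfl
        simp at this
      · intro i
        fin_cases i <;>
          simp only [pderiv_mul, pderiv_X, Pi.single_apply] <;>
          simp <;>
          first
            | linear_combination (ω * ω + 2 * ω) * hw
            | linear_combination (ω * ω + ω + 1) * hw
            | linear_combination (2 * ω + 1) * hw
    · -- t = 1 : use (1, -1, 1)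
      refine ⟨![1, -1, 1], ?_, ?_⟩
      · intro h
        have : (![1, -1, 1] : Fin 3 → ℂ) 0 = 0 := by rw [h]; rfl
        simp at this
      · intro i
        fin_cases i <;>
          simp only [pderiv_mul, pderiv_X, Pi.single_apply] <;>
          simp
    · -- t = 9 : use (1, 1, 1)
      refine ⟨![1, 1, 1], ?_, ?_⟩
      · intro h
        have : (![1, 1, 1] : Fin 3 → ℂ) 0 = 0 := by rw [h]; rfl
        simp at this
      · intro i
        fin_cases i <;>
          simp only [pderiv_mul, pderiv_X, Pi.single_apply] <;>
          simp <;> ring_nf
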